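/- The image of the map v : {0,1}⁷ → ℤ⁴, v(b₀,…,b₆) = f(b₆,b₅,b₄) ⊙ ((−1)^{b₃}, (−1)^{b₂}, (−1)^{b₁}, (−1)^{b₀}), is exactly the set of pairs (p,q) ∈ Q₁₂ × Q₁₂ such that not both p and q are inner points, where the inner points of Q₁₂ are the four points (±1,±1); equivalently, the image consists of the 144 vectors of Q₁₂ × Q₁₂ minus the 16 vectors whose two symbols are both inner points. -/

import Mathlib

set_option maxRecDepth 4000


/-- The basic map `f` from bit triples to 4-vectors over ℤ, given by the table. -/
def f : Bool → Bool → Bool → (Fin 4 → ℤ)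
  | false, false, false => ![1, 3, 1, 3]
  | false, false, true  => ![1, 3, 1, 1]
  | false, true,  true  => ![1, 3, 3, 1]
  | false, true,  false => ![1, 1, 3, 1]
  | true,  true,  false => ![3, 1, 3, 1]
  | true,  true,  true  => ![3, 1, 1, 1]
  | true,  false, true  => ![3, 1, 1, 3]
  | true,  false, false => ![1, 1, 1, 3]

/-- `(-1)^b` for a bit `b`. -/
def neg1 (b : Bool) : ℤ := if b then -1 else 1

/-- The 12-QAM constellation. -/
def Q12 : Set (ℤ × ℤ) :=
  {p | p.1 ∈ ({-3, -1, 1, 3} : Set ℤ) ∧ p.2 ∈ ({-3, -1, 1, 3} : Set ℤ) ∧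
    ¬(|p.1| = 3 ∧ |p.2| = 3)}

/-- An inner point of the 12-QAM constellation: `|x| = |y| = 1`. -/
def IsInner (p : ℤ × ℤ) : Prop := |p.1| = 1 ∧ |p.2| = 1

/-- The mapping `v(b₀,…,b₆) = f(b₆,b₅,b₄) ⊙ ((−1)^{b₃},(−1)^{b₂},(−1)^{b₁},(−1)^{b₀})`. -/
def v (b : Fin 7 → Bool) : Fin 4 → ℤ := fun i =>
  f (b 6) (b 5) (b 4) i * ![neg1 (b 3), neg1 (b 2), neg1 (b 1), neg1 (b 0)] i

set_option maxHeartbeats 4000000 in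
/-- the image of `v` is exactly the set of concatenated pairs from
`Q12 × Q12` such that not both symbols are inner points. -/
theorem v_range :
    Set.range v =
      {w : Fin 4 → ℤ | ((w 0, w 1) ∈ Q12 ∧ (w 2, w 3) ∈ Q12) ∧
        ¬(IsInner (w 0, w 1) ∧ IsInner (w 2, w 3))} := by
  ext w
  have hw : w = ![w 0, w 1, w 2, w 3] := by funext i; fin_cases i <;> rfl
  constructor
  · rintro ⟨b, rfl⟩
    simp only [Set.mem_setOf_eq, Q12, IsInner, Set.mem_insert_iff, Set.mem_singleton_iff]
    revert b
    decide
  · intro hmem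
    simp only [Set.mem_setOf_eq, Q12, IsInner, Set.mem_insert_iff,
      Set.mem_singleton_iff] at hmem
    obtain ⟨⟨⟨ha, hb, hab⟩, hc, hd, hcd⟩, hinner⟩ := hmem
    rw [Set.mem_range, hw]
    rcases ha with ha|ha|ha|ha <;> rcases hb with hb|hb|hb|hb <;>
      rcases hc with hc|hc|hc|hc <;> rcases hd with hd|hd|hd|hd <;>
      (revert hab hcd hinner; rw [ha, hb, hc, hd]; decide)
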